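/- For all integers l ≥ 1 and m ≥ 0, the coefficient of x^{2m+2l-1} in the polynomial (1+x)^{2l-1}/(1+x/2)^{2l-2m} (expanded as a power series) is zero; equivalently, Res(g_{2l,m}, 1) = 0 where g_{2l,m}(z) = 2^{2l} z^{2l-1}/((z-1)^{2l+2m}(z+1)^{2l-2m}). -/

import Mathlib

open PowerSeries Finset

lemma vpow_coeff (d k : ℕ) (h : d < k) :
    PowerSeries.coeff (R := ℚ) k ((PowerSeries.X + 2) ^ d) = 0 := by
  have h1 : ((PowerSeries.X + 2 : PowerSeries ℚ)) = ((Polynomial.X + Polynomial.C 2 : Polynomial ℚ) : PowerSeries ℚ) := by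
    push_cast
    rfl
  rw [h1, ← Polynomial.coe_pow, Polynomial.coeff_coe]
  apply Polynomial.coeff_eq_zero_of_natDegree_lt
  calc ((Polynomial.X + Polynomial.C 2 : Polynomial ℚ) ^ d).natDegree
      ≤ d * (Polynomial.X + Polynomial.C 2 : Polynomial ℚ).natDegree := Polynomial.natDegree_pow_le
    _ ≤ d * 1 := by gcongr; exact le_of_eq (Polynomial.natDegree_X_add_C 2)
    _ < k := by omega

lemma key (n : ℕ) : ((4:PowerSeries ℚ)) ^ n * (1 + PowerSeries.X) ^ n
    = ∑ j ∈ range (n+1), PowerSeries.C (R := ℚ) ((n.choose j : ℚ) * (-1)^j)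
        * (PowerSeries.X ^ (2*j) * (PowerSeries.X + 2) ^ (2*(n-j))) := by
  have h4 : ((PowerSeries.X + 2 : PowerSeries ℚ))^2 + (-(PowerSeries.X^2)) = 4 * (1 + PowerSeries.X) := by ring
  rw [← mul_pow, ← h4, add_pow, ← Finset.sum_range_reflect]
  refine Finset.sum_congr rfl fun j hj => ?_
  have hj' : j ≤ n := by simp at hj; omega
  have h1 : n + 1 - 1 - j = n - j := by omega
  have h2 : n - (n - j) = j := by omega
  rw [h1, h2, Nat.choose_symm hj']
  have hneg : (-(PowerSeries.X^2) : PowerSeries ℚ)^j = PowerSeries.C (R := ℚ) ((-1)^j) * PowerSeries.X^(2*j) := by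
    rw [neg_pow, ← pow_mul]
    simp [mul_comm]
  rw [hneg, pow_mul (PowerSeries.X + 2) 2 (n-j)]
  simp only [map_mul, map_pow, map_neg, map_one, map_natCast]
  ring

theorem coeff_expansion_zero (l m : ℕ) (hl : 1 ≤ l) :
    PowerSeries.coeff (R := ℚ) (2 * m + 2 * l - 1)
      ((1 + PowerSeries.X) ^ (2 * l - 1)
        * (1 + PowerSeries.C (R := ℚ) (1 / 2) * PowerSeries.X) ^ (2 * m)
        * ((1 + PowerSeries.C (R := ℚ) (1 / 2) * PowerSeries.X) ^ (2 * l))⁻¹) = 0 := by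
  set n := 2 * l - 1 with hn
  set v : PowerSeries ℚ := PowerSeries.X + 2 with hv
  have hu : (1 + PowerSeries.C (R := ℚ) (1 / 2) * PowerSeries.X : PowerSeries ℚ)
      = PowerSeries.C (R := ℚ) (1/2) * v := by
    rw [hv, mul_add]
    have : (PowerSeries.C (R := ℚ) (1/2)) * 2 = 1 := by
      rw [show (2 : PowerSeries ℚ) = PowerSeries.C (R := ℚ) 2 from rfl, ← map_mul]
      norm_num
    rw [this, add_comm]
  have hvc : PowerSeries.constantCoeff (R := ℚ) (v ^ (2*l)) ≠ 0 := by
    have h2 : PowerSeries.constantCoeff (R := ℚ) v = 2 := by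
      rw [hv]; simp [map_ofNat]
    rw [map_pow, h2]
    positivity
  have hinv : ((1 + PowerSeries.C (R := ℚ) (1 / 2) * PowerSeries.X : PowerSeries ℚ) ^ (2*l))⁻¹
      = PowerSeries.C (R := ℚ) ((2:ℚ)^(2*l)) * (v ^ (2*l))⁻¹ := by
    have hh : (((1/2:ℚ))^(2*l))⁻¹ = (2:ℚ)^(2*l) := by
      rw [one_div, inv_pow, inv_inv]
    rw [hu, mul_pow, PowerSeries.mul_inv_rev, ← map_pow, PowerSeries.C_inv, hh, mul_comm]
  have h14 : PowerSeries.C (R := ℚ) (((4:ℚ)^n)⁻¹) * (4 : PowerSeries ℚ)^n = 1 := by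
    rw [show (4 : PowerSeries ℚ) = PowerSeries.C (R := ℚ) 4 from rfl, ← map_pow, ← map_mul]
    norm_num
  have hid : (1 + PowerSeries.X : PowerSeries ℚ)^n
      = PowerSeries.C (R := ℚ) (((4:ℚ)^n)⁻¹) * ((4 : PowerSeries ℚ)^n * (1 + PowerSeries.X)^n) := by
    rw [← mul_assoc, h14, one_mul]
  have hG : (1 + PowerSeries.X : PowerSeries ℚ) ^ n
        * (1 + PowerSeries.C (R := ℚ) (1 / 2) * PowerSeries.X) ^ (2 * m)
        * ((1 + PowerSeries.C (R := ℚ) (1 / 2) * PowerSeries.X) ^ (2 * l))⁻¹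
      = ∑ j ∈ range (n+1),
          PowerSeries.C (R := ℚ) (((4:ℚ)^n)⁻¹ * ((n.choose j : ℚ) * (-1)^j) * (1/2)^(2*m) * 2^(2*l))
            * (PowerSeries.X ^ (2*j) * (v ^ (2*(n-j)+2*m) * (v ^ (2*l))⁻¹)) := by
    rw [hid, key n, hinv, hu, mul_pow, ← map_pow, Finset.mul_sum, Finset.sum_mul, Finset.sum_mul]
    refine Finset.sum_congr rfl fun j hj => ?_
    rw [pow_add]
    simp only [map_mul]
    ring
  rw [hG, map_sum]
  refine Finset.sum_eq_zero fun j hj => ?_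
  rw [PowerSeries.coeff_C_mul, PowerSeries.coeff_X_pow_mul']
  simp only [mem_range] at hj
  split_ifs with h
  · have hsplit : 2*(n-j)+2*m = (2*(n-j)+2*m-2*l) + 2*l := by omega
    rw [hsplit, pow_add, mul_assoc (v ^ (2*(n-j)+2*m-2*l)), PowerSeries.mul_inv_cancel _ hvc, mul_one]
    rw [vpow_coeff]
    · ring
    · omega
  · ring
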